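/- Let K := E₁₄ + E₂₅ + E₃₆ ∈ Mat₆(ℂ). For a 6×6 complex matrix g, the following are equivalent: (i) g ∈ Sp(6,ℂ) and g K g⁻¹ = c·K for some nonzero c ∈ ℂ; (ii) there exist 3×3 complex matrices A, B and a nonzero a ∈ ℂ such that g is the block matrix [[A, B],[0, a·A]], with a·Aᵀ A = I₃ and Aᵀ B = Bᵀ A. -/

import Mathlib

open scoped Matrix

noncomputable section

/-- The `6 × 6` matrix assembled from the `3 × 3` blocks `[[S, R], [T, U]]`. -/
def toM (S R T U : Matrix (Fin 3) (Fin 3) ℂ) : Matrix (Fin 6) (Fin 6) ℂ :=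
  Matrix.reindex finSumFinEquiv finSumFinEquiv (Matrix.fromBlocks S R T U)

/-- The matrix `J = [[0, I₃], [-I₃, 0]]` of the standard symplectic form on `ℂ⁶`. -/
def J : Matrix (Fin 6) (Fin 6) ℂ := toM 0 1 (-1) 0

/-- The symplectic Lie algebra `sp(6, ℂ) = {X : Xᵀ J + J X = 0}` as a complex
subspace of `Mat₆(ℂ)`. -/
def sp6 : Submodule ℂ (Matrix (Fin 6) (Fin 6) ℂ) where
  carrier := {X | Xᵀ * J + J * X = 0}
  zero_mem' := by simp
  add_mem' := by
    intro a b ha hb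
    simp only [Set.mem_setOf_eq] at *
    rw [Matrix.transpose_add, Matrix.add_mul, Matrix.mul_add]
    calc aᵀ * J + bᵀ * J + (J * a + J * b) = (aᵀ * J + J * a) + (bᵀ * J + J * b) := by abel
    _ = 0 := by rw [ha, hb, add_zero]
  smul_mem' := by
    intro c a ha
    simp only [Set.mem_setOf_eq] at *
    rw [Matrix.transpose_smul, Matrix.smul_mul, Matrix.mul_smul, ← smul_add, ha, smul_zero]

/-- The centralizer `{Z : Z H = H Z}` of a matrix `H`, as a complex subspace of
`Mat₆(ℂ)`. -/
def centr (H : Matrix (Fin 6) (Fin 6) ℂ) : Submodule ℂ (Matrix (Fin 6) (Fin 6) ℂ) where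
  carrier := {Z | Z * H = H * Z}
  zero_mem' := by simp
  add_mem' := by
    intro a b ha hb
    simp only [Set.mem_setOf_eq] at *
    rw [Matrix.add_mul, Matrix.mul_add, ha, hb]
  smul_mem' := by
    intro c a ha
    simp only [Set.mem_setOf_eq] at *
    rw [Matrix.smul_mul, Matrix.mul_smul, ha]

/-- The nilpotent matrix `K = E₁₄ + E₂₅ + E₃₆` (indices `1`-based). -/
def K : Matrix (Fin 6) (Fin 6) ℂ :=
  Matrix.single 0 3 1 + Matrix.single 1 4 1 + Matrix.single 2 5 1

set_option maxRecDepth 100000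
set_option maxHeartbeats 1000000

lemma toM_mul (S R T U S' R' T' U' : Matrix (Fin 3) (Fin 3) ℂ) :
    toM S R T U * toM S' R' T' U' =
      toM (S*S' + R*T') (S*R' + R*U') (T*S' + U*T') (T*R' + U*U') := by
  simp only [toM, Matrix.reindex_apply, Matrix.submatrix_mul_equiv,
    Matrix.fromBlocks_multiply]

lemma toM_transpose (S R T U : Matrix (Fin 3) (Fin 3) ℂ) :
    (toM S R T U)ᵀ = toM Sᵀ Tᵀ Rᵀ Uᵀ := by
  simp only [toM, Matrix.reindex_apply, Matrix.transpose_submatrix,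
    Matrix.fromBlocks_transpose]

lemma toM_smul (c : ℂ) (S R T U : Matrix (Fin 3) (Fin 3) ℂ) :
    c • toM S R T U = toM (c•S) (c•R) (c•T) (c•U) := by
  simp only [toM, Matrix.reindex_apply]
  rw [← Matrix.fromBlocks_smul]
  rfl

lemma toM_one : toM 1 0 0 1 = 1 := by
  simp [toM, Matrix.fromBlocks_one]

lemma toM_neg (S R T U : Matrix (Fin 3) (Fin 3) ℂ) :
    - toM S R T U = toM (-S) (-R) (-T) (-U) := by
  simp only [toM, Matrix.reindex_apply]
  rw [← Matrix.fromBlocks_neg]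
  rfl

lemma toM_inj {S R T U S' R' T' U' : Matrix (Fin 3) (Fin 3) ℂ} :
    toM S R T U = toM S' R' T' U' ↔ (S = S' ∧ R = R' ∧ T = T' ∧ U = U') := by
  constructor
  · intro h
    have h2 : Matrix.fromBlocks S R T U = Matrix.fromBlocks S' R' T' U' :=
      (Matrix.reindex finSumFinEquiv finSumFinEquiv).injective h
    exact ⟨by simpa using congrArg Matrix.toBlocks₁₁ h2,
           by simpa using congrArg Matrix.toBlocks₁₂ h2,
           by simpa using congrArg Matrix.toBlocks₂₁ h2,
           by simpa using congrArg Matrix.toBlocks₂₂ h2⟩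
  · rintro ⟨rfl, rfl, rfl, rfl⟩; rfl

lemma exists_blocks (g : Matrix (Fin 6) (Fin 6) ℂ) :
    ∃ A B C D, g = toM A B C D := by
  set g' := Matrix.reindex (finSumFinEquiv (m := 3) (n := 3)).symm
    (finSumFinEquiv (m := 3) (n := 3)).symm g with hg'
  refine ⟨g'.toBlocks₁₁, g'.toBlocks₁₂, g'.toBlocks₂₁, g'.toBlocks₂₂, ?_⟩
  simp [toM, Matrix.fromBlocks_toBlocks, hg']

lemma K_eq : K = toM 0 1 0 0 := by
  have h0 : ((0 : Fin 6) : ℕ) = 0 := rfl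
  have h1 : ((1 : Fin 6) : ℕ) = 1 := rfl
  have h2 : ((2 : Fin 6) : ℕ) = 2 := rfl
  have h3 : ((3 : Fin 6) : ℕ) = 3 := rfl
  have h4 : ((4 : Fin 6) : ℕ) = 4 := rfl
  have h5 : ((5 : Fin 6) : ℕ) = 5 := rfl
  ext i j
  fin_cases i <;> fin_cases j <;>
    norm_num [K, toM, Matrix.single, Matrix.fromBlocks, Matrix.one_apply,
      finSumFinEquiv, finAddFlip, Matrix.submatrix_apply, Fin.ext_iff, Fin.addCases,
      Fin.castLT, Fin.subNat, h0, h1, h2, h3, h4, h5, Sum.elim]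

lemma symp_isUnit_det {g : Matrix (Fin 6) (Fin 6) ℂ} (h : gᵀ * J * g = J) :
    IsUnit g.det := by
  have hJJ : J * J = (-1 : Matrix (Fin 6) (Fin 6) ℂ) := by
    show toM 0 1 (-1) 0 * toM 0 1 (-1) 0 = -1
    rw [toM_mul]
    have hn : -toM 1 0 0 1 = toM (-1) 0 0 (-1) := by rw [toM_neg]; norm_num
    simp only [Matrix.zero_mul, Matrix.mul_zero, Matrix.one_mul, Matrix.mul_one,
      Matrix.neg_mul, Matrix.mul_neg, add_zero, zero_add, neg_zero]
    rw [← hn, toM_one]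
  have hdet : J.det * J.det = 1 := by
    have hd := congrArg Matrix.det hJJ
    rw [Matrix.det_mul, Matrix.det_neg, Matrix.det_one] at hd
    rw [hd]
    norm_num
  have hJ0 : J.det ≠ 0 := fun h0 => by simp [h0] at hdet
  have h2 := congrArg Matrix.det h
  rw [Matrix.det_mul, Matrix.det_mul, Matrix.det_transpose] at h2
  have h3 : g.det * g.det * J.det = 1 * J.det := by rw [one_mul]; linear_combination h2
  have h4 := mul_right_cancel₀ hJ0 h3
  refine isUnit_iff_ne_zero.mpr fun h0 => ?_
  rw [h0] at h4; norm_num at h4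

/-- For a `6 × 6` complex matrix `g`, the following are equivalent:
(i) `g ∈ Sp(6, ℂ)` and `g K g⁻¹ = c • K` for some nonzero `c ∈ ℂ`;
(ii) `g = [[A, B], [0, a • A]]` in blocks, for some `3 × 3` matrices `A, B` and some
nonzero `a ∈ ℂ` with `a • (Aᵀ A) = I₃` and `Aᵀ B = Bᵀ A`. -/
theorem statement_10 (g : Matrix (Fin 6) (Fin 6) ℂ) :
    (gᵀ * J * g = J ∧ ∃ c : ℂ, c ≠ 0 ∧ g * K * g⁻¹ = c • K) ↔
    (∃ (A B : Matrix (Fin 3) (Fin 3) ℂ) (a : ℂ), a ≠ 0 ∧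
      g = toM A B 0 (a • A) ∧ a • (Aᵀ * A) = 1 ∧ Aᵀ * B = Bᵀ * A) := by
  constructor
  · rintro ⟨hsymp, c, hc, hK⟩
    have hgu := symp_isUnit_det hsymp
    obtain ⟨A, B, C, D, rfl⟩ := exists_blocks g
    have h1 : toM A B C D * K = (c • K) * toM A B C D := by
      have h := congrArg (· * toM A B C D) hK
      rwa [Matrix.mul_assoc (toM A B C D * K), Matrix.nonsing_inv_mul _ hgu,
        Matrix.mul_one] at h
    rw [K_eq, Matrix.smul_mul, toM_mul, toM_mul, toM_smul] at h1
    simp only [Matrix.mul_zero, Matrix.zero_mul, Matrix.mul_one, Matrix.one_mul,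
      add_zero, zero_add, smul_zero] at h1
    obtain ⟨e1, e2, -, e4⟩ := toM_inj.mp h1
    have hD : D = c⁻¹ • A := by rw [e2, smul_smul, inv_mul_cancel₀ hc, one_smul]
    subst e4
    rw [show J = toM 0 1 (-1) 0 from rfl, toM_transpose, toM_mul, toM_mul] at hsymp
    simp only [Matrix.mul_zero, Matrix.zero_mul, Matrix.mul_one, Matrix.one_mul,
      add_zero, zero_add, Matrix.mul_neg, Matrix.neg_mul, Matrix.transpose_zero,
      neg_zero] at hsymp
    obtain ⟨-, f2, f3, f4⟩ := toM_inj.mp hsymp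
    refine ⟨A, B, c⁻¹, inv_ne_zero hc, by rw [hD], ?_, ?_⟩
    · rw [hD] at f2; rwa [Matrix.mul_smul] at f2
    · rw [hD] at f4
      rw [Matrix.transpose_smul, Matrix.smul_mul, Matrix.mul_smul] at f4
      have h5 : c⁻¹ • (Aᵀ * B) = c⁻¹ • (Bᵀ * A) := neg_add_eq_zero.mp f4
      exact smul_right_injective _ (inv_ne_zero hc) h5
  · rintro ⟨A, B, a, ha, rfl, hAA, hAB⟩
    have hsymp : (toM A B 0 (a • A))ᵀ * J * toM A B 0 (a • A) = J := by
      rw [show J = toM 0 1 (-1) 0 from rfl, toM_transpose, toM_mul, toM_mul]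
      refine toM_inj.mpr ⟨?_, ?_, ?_, ?_⟩
      · simp
      · simp only [Matrix.mul_zero, Matrix.zero_mul, Matrix.mul_one, Matrix.one_mul,
          add_zero, zero_add, Matrix.transpose_zero, Matrix.mul_smul]
        exact hAA
      · simp only [Matrix.mul_zero, Matrix.zero_mul, Matrix.mul_one, Matrix.one_mul,
          add_zero, zero_add, Matrix.transpose_zero, Matrix.mul_neg, Matrix.neg_mul,
          Matrix.transpose_smul, Matrix.smul_mul, neg_zero]
        rw [hAA]
      · simp only [Matrix.mul_zero, Matrix.zero_mul, Matrix.mul_one, Matrix.one_mul,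
          add_zero, zero_add, Matrix.transpose_zero, Matrix.mul_neg, Matrix.neg_mul,
          Matrix.transpose_smul, Matrix.smul_mul, Matrix.mul_smul, neg_zero, hAB]
        abel
    have hgu := symp_isUnit_det hsymp
    refine ⟨hsymp, a⁻¹, inv_ne_zero ha, ?_⟩
    have key : toM A B 0 (a • A) * K = (a⁻¹ • K) * toM A B 0 (a • A) := by
      rw [K_eq, Matrix.smul_mul, toM_mul, toM_mul, toM_smul]
      simp [smul_smul, inv_mul_cancel₀ ha]
    rw [key, Matrix.mul_assoc, Matrix.mul_nonsing_inv _ hgu, Matrix.mul_one]
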